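/- Let n = v ⊕ z be a non-singular 2-step nilpotent Lie algebra with inner product, z̃ ⊆ z a subspace with orthogonal projection π, and ñ = v ⊕ z̃ the Lie algebra with bracket [V,V']_ñ = π([V,V']_n). If F̃ : ñ → ñ is a skew-symmetric map satisfying the closedness condition (C2) on ñ, then F : n → n defined by F(V+Z) = F̃(V + π(Z)) is skew-symmetric and satisfies (C2) on n; moreover F restricted to v is nonzero whenever F̃ restricted to v is nonzero. -/

import Mathlib

open RealInnerProductSpace

lemma orthogonalProjection_eq_self_iff {n : Type*} [NormedAddCommGroup n] [InnerProductSpace ℝ n]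
    {K : Submodule ℝ n} [K.HasOrthogonalProjection] {v : n} :
    (Submodule.orthogonalProjection K v : n) = v ↔ v ∈ K :=
  Submodule.starProjection_eq_self_iff

lemma inner_orthogonalProjection_left_eq_right {n : Type*} [NormedAddCommGroup n]
    [InnerProductSpace ℝ n] (K : Submodule ℝ n) [K.HasOrthogonalProjection] (u v : n) :
    ⟪(Submodule.orthogonalProjection K u : n), v⟫ = ⟪u, (Submodule.orthogonalProjection K v : n)⟫ :=
  Submodule.inner_starProjection_left_eq_right K u v

lemma aux_fix_12 {n : Type*} [NormedAddCommGroup n] [InnerProductSpace ℝ n]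
    [FiniteDimensional ℝ n] (z zt : Submodule ℝ n) (hzt : zt ≤ z) {w : n}
    (hw : w ∈ zᗮ ⊔ zt) :
    (Submodule.orthogonalProjection zᗮ w : n) + (Submodule.orthogonalProjection zt w : n) = w := by
  obtain ⟨a, ha, b, hb, rfl⟩ := Submodule.mem_sup.mp hw
  have hbz : b ∈ (zᗮ)ᗮ := z.le_orthogonal_orthogonal (hzt hb)
  have haz : a ∈ ztᗮ := (Submodule.orthogonal_le hzt) ha
  have h1 : (Submodule.orthogonalProjection zᗮ a : n) = a := orthogonalProjection_eq_self_iff.mpr ha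
  have h2 : Submodule.orthogonalProjection zᗮ b = 0 :=
    Submodule.orthogonalProjectionOnto_apply_of_mem_orthogonal hbz
  have h3 : Submodule.orthogonalProjection zt a = 0 :=
    Submodule.orthogonalProjectionOnto_apply_of_mem_orthogonal haz
  have h4 : (Submodule.orthogonalProjection zt b : n) = b := orthogonalProjection_eq_self_iff.mpr hb
  rw [map_add, map_add]
  push_cast
  rw [h1, h4, h2, h3]
  simp

lemma aux_inner_proj_12 {n : Type*} [NormedAddCommGroup n] [InnerProductSpace ℝ n]
    [FiniteDimensional ℝ n] (z zt : Submodule ℝ n) (hzt : zt ≤ z) {x : n}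
    (hx : x ∈ zᗮ ⊔ zt) {c : n} (hc : c ∈ z) :
    ⟪x, c⟫ = ⟪x, (Submodule.orthogonalProjection zt c : n)⟫ := by
  obtain ⟨a, ha, b, hb, rfl⟩ := Submodule.mem_sup.mp hx
  have haz : a ∈ ztᗮ := (Submodule.orthogonal_le hzt) ha
  have hac : ⟪a, c⟫ = 0 := (Submodule.mem_orthogonal zᗮ c).mp
    (z.le_orthogonal_orthogonal hc) a ha
  have hac2 : ⟪a, (Submodule.orthogonalProjection zt c : n)⟫ = 0 :=
    (Submodule.mem_orthogonal' zt a).mp haz _ (Submodule.orthogonalProjection zt c).2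
  have hbc : ⟪b, c⟫ = ⟪b, (Submodule.orthogonalProjection zt c : n)⟫ := by
    rw [← inner_orthogonalProjection_left_eq_right,
      orthogonalProjection_eq_self_iff.mpr hb]
  rw [inner_add_left, inner_add_left, hac, hac2, hbc]

/-- Let `n = v ⊕ z` be a non-singular 2-step nilpotent metric Lie
algebra, `z̃ ⊆ z` with orthogonal projection `π`, and `ñ = v ⊕ z̃` the Lie
algebra with bracket `π ∘ [·,·]`. If `F̃` is skew-symmetric on `ñ` and satisfies
(C2) there, then `F(V+Z) := F̃(V + π Z)` is skew-symmetric and satisfies (C2)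
on `n`; moreover `F|_v ≠ 0` whenever `F̃|_v ≠ 0`. -/
theorem stmt_12 {n : Type*} [NormedAddCommGroup n] [InnerProductSpace ℝ n]
    [FiniteDimensional ℝ n]
    (B : n →ₗ[ℝ] n →ₗ[ℝ] n)
    (hanti : ∀ X Y, B X Y = - B Y X)
    (h2step : ∀ X Y W, B (B X Y) W = 0)
    (z : Submodule ℝ n) (hz : ∀ X, X ∈ z ↔ ∀ Y, B X Y = 0)
    (hns : ∀ X, X ∉ z → ∀ Z ∈ z, ∃ Y, B X Y = Z)
    (zt : Submodule ℝ n) (hzt : zt ≤ z)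
    (Ft : n →ₗ[ℝ] n)
    (hFtskew : ∀ X Y, ⟪Ft X, Y⟫ = - ⟪X, Ft Y⟫)
    (hFtrange : ∀ X, Ft X ∈ zᗮ ⊔ zt)
    (hFtC2 : ∀ U ∈ zᗮ, ∀ V ∈ zᗮ, ∀ W ∈ zᗮ,
      ⟪Ft U, (Submodule.orthogonalProjection zt (B V W) : n)⟫ +
      ⟪Ft V, (Submodule.orthogonalProjection zt (B W U) : n)⟫ +
      ⟪Ft W, (Submodule.orthogonalProjection zt (B U V) : n)⟫ = 0)
    (F : n →ₗ[ℝ] n)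
    (hF : ∀ X, F X = Ft ((Submodule.orthogonalProjection zᗮ X : n) +
      (Submodule.orthogonalProjection zt X : n))) :
    (∀ X Y, ⟪F X, Y⟫ = - ⟪X, F Y⟫) ∧
    (∀ U ∈ zᗮ, ∀ V ∈ zᗮ, ∀ W ∈ zᗮ,
      ⟪(Submodule.orthogonalProjection z (F U) : n), B V W⟫ +
      ⟪(Submodule.orthogonalProjection z (F V) : n), B W U⟫ +
      ⟪(Submodule.orthogonalProjection z (F W) : n), B U V⟫ = 0) ∧
    ((∃ V ∈ zᗮ, Ft V ≠ 0) → ∃ V ∈ zᗮ, F V ≠ 0) := by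
  -- F agrees with Ft on zᗮ
  have hFv : ∀ V ∈ zᗮ, F V = Ft V := by
    intro V hV
    rw [hF]
    congr 1
    have h1 : (Submodule.orthogonalProjection zᗮ V : n) = V := orthogonalProjection_eq_self_iff.mpr hV
    have h2 : Submodule.orthogonalProjection zt V = 0 :=
      Submodule.orthogonalProjectionOnto_apply_of_mem_orthogonal
        ((Submodule.orthogonal_le hzt) hV)
    rw [h1, h2]
    simp
  -- key computation for skewness
  have key : ∀ A C : n, ⟪F A, C⟫ = - ⟪A, Ft C⟫ := by
    intro A C
    rw [hF, hFtskew, inner_add_left, inner_orthogonalProjection_left_eq_right,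
      inner_orthogonalProjection_left_eq_right, ← inner_add_right,
      aux_fix_12 z zt hzt (hFtrange C)]
  refine ⟨?_, ?_, ?_⟩
  · intro X Y
    rw [key X Y]
    have : ⟪X, F Y⟫ = - ⟪Y, Ft X⟫ := by rw [real_inner_comm, key Y X]
    linarith [this, hFtskew X Y, real_inner_comm Y (Ft X)]
  · intro U hU V hV W hW
    have hBz : ∀ A C : n, B A C ∈ z := fun A C => (hz (B A C)).mpr (fun Y => h2step A C Y)
    have hterm : ∀ A ∈ zᗮ, ∀ C D : n,
        ⟪(Submodule.orthogonalProjection z (F A) : n), B C D⟫ =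
        ⟪Ft A, (Submodule.orthogonalProjection zt (B C D) : n)⟫ := by
      intro A hA C D
      rw [inner_orthogonalProjection_left_eq_right,
        orthogonalProjection_eq_self_iff.mpr (hBz C D), hFv A hA,
        aux_inner_proj_12 z zt hzt (hFtrange A) (hBz C D)]
    rw [hterm U hU V W, hterm V hV W U, hterm W hW U V]
    exact hFtC2 U hU V hV W hW
  · rintro ⟨V, hV, hne⟩
    exact ⟨V, hV, by rw [hFv V hV]; exact hne⟩
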